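/- arXiv:0905.1090 — 3 statements merged into one kernel-verified Lean document; each statement's English description precedes it below -/
import Mathlib

section
/- Let O_F be an F-order ideal with each O_i nonempty. Then the set of all F-terms T^n·f_1 ∪ ⋯ ∪ T^n·f_m equals the union ⋃_{j=0}^∞ ∂^j O_F of all higher borders of O_F, and this union is disjoint, i.e., ∂^i O_F ∩ ∂^j O_F = ∅ for i ≠ j. -/
open MvPolynomial

/-- An order ideal: a finite set of terms (exponent vectors), closed under divisors. -/
def IsOrderIdeal {n : ℕ} (O : Finset (Fin n →₀ ℕ)) : Prop :=
  ∀ t ∈ O, ∀ s : Fin n →₀ ℕ, s ≤ t → s ∈ O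

/-- The `F`-order ideal `O_F = O_1·f_1 ∪ ⋯ ∪ O_m·f_m`, i.e. the set of products `t·f_i`
with `t ∈ O_i`. -/
def fTermSet {K : Type*} [Field K] {n m : ℕ} (O : Fin m → Finset (Fin n →₀ ℕ))
    (f : Fin m → MvPolynomial (Fin n) K) : Set (MvPolynomial (Fin n) K) :=
  ⋃ i, (fun t => (monomial t (1 : K)) * f i) '' (O i : Set (Fin n →₀ ℕ))

/-- The border `∂S = (x_1·S ∪ ⋯ ∪ x_n·S) \ S`. -/
def borderS {K : Type*} [Field K] {n : ℕ} (S : Set (MvPolynomial (Fin n) K)) :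
    Set (MvPolynomial (Fin n) K) :=
  (⋃ j : Fin n, (fun g => X j * g) '' S) \ S

/-- The `k`-th border closure: `∂̄⁰S = S` and `∂̄^{k+1}S = ∂̄^k S ∪ ∂(∂̄^k S)`. -/
def borderClosureS {K : Type*} [Field K] {n : ℕ} (S : Set (MvPolynomial (Fin n) K)) :
    ℕ → Set (MvPolynomial (Fin n) K)
  | 0 => S
  | k + 1 => borderClosureS S k ∪ borderS (borderClosureS S k)

/-- The `k`-th border: `∂⁰S = S` and `∂^{k+1}S = ∂(∂̄^k S)`. -/
def higherBorderS {K : Type*} [Field K] {n : ℕ} (S : Set (MvPolynomial (Fin n) K)) :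
    ℕ → Set (MvPolynomial (Fin n) K)
  | 0 => S
  | k + 1 => borderS (borderClosureS S k)

/- ### Auxiliary development -/

/-- Degree of an exponent vector. -/
def deg' {n : ℕ} (t : Fin n →₀ ℕ) : ℕ := t.sum fun _ => id

lemma deg'_add {n : ℕ} (a b : Fin n →₀ ℕ) : deg' (a + b) = deg' a + deg' b := by
  simp [deg', Finsupp.sum_add_index']

lemma deg'_single {n : ℕ} (j : Fin n) : deg' (Finsupp.single j 1) = 1 := by
  simp [deg', Finsupp.sum_single_index]

lemma eq_of_le_of_deg'_le {n : ℕ} {a b : Fin n →₀ ℕ} (h : a ≤ b) (h2 : deg' b ≤ deg' a) :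
    a = b := by
  rcases eq_or_lt_of_le h with h | h
  · exact h
  · exact absurd (Finsupp.sum_id_lt_of_lt _ _ h) (not_lt.mpr h2)

lemma Xmul {K : Type*} [Field K] {n : ℕ} (j : Fin n) (t : Fin n →₀ ℕ) :
    X j * monomial t (1 : K) = monomial (Finsupp.single j 1 + t) 1 := by
  rw [X, monomial_mul, one_mul]

/-- `g` can be written as `x^t · f i` with `t` at distance `d` above `O i`. -/
def Rep' {K : Type*} [Field K] {n m : ℕ} (O : Fin m → Finset (Fin n →₀ ℕ))
    (f : Fin m → MvPolynomial (Fin n) K) (g : MvPolynomial (Fin n) K) (d : ℕ) : Prop :=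
  ∃ i t s, s ∈ O i ∧ s ≤ t ∧ deg' t = deg' s + d ∧ g = monomial t (1 : K) * f i

/-- Elements at distance at most `k` from `O_F`. -/
def Aset {K : Type*} [Field K] {n m : ℕ} (O : Fin m → Finset (Fin n →₀ ℕ))
    (f : Fin m → MvPolynomial (Fin n) K) (k : ℕ) : Set (MvPolynomial (Fin n) K) :=
  {g | ∃ d ≤ k, Rep' O f g d}

lemma fTermSet_eq {K : Type*} [Field K] {n m : ℕ} (O : Fin m → Finset (Fin n →₀ ℕ))
    (f : Fin m → MvPolynomial (Fin n) K) :
    fTermSet O f = {g | Rep' O f g 0} := by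
  ext g
  constructor
  · intro hg
    rcases Set.mem_iUnion.mp hg with ⟨i, t, ht, rfl⟩
    exact ⟨i, t, t, ht, le_rfl, by omega, rfl⟩
  · rintro ⟨i, t, s, hs, hst, hdeg, rfl⟩
    have : s = t := eq_of_le_of_deg'_le hst (by omega)
    subst this
    exact Set.mem_iUnion.mpr ⟨i, _, hs, rfl⟩

lemma rep_step {K : Type*} [Field K] {n m : ℕ} {O : Fin m → Finset (Fin n →₀ ℕ)}
    {f : Fin m → MvPolynomial (Fin n) K} {g : MvPolynomial (Fin n) K} {d : ℕ} (j : Fin n)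
    (h : Rep' O f g d) : Rep' O f (X j * g) (d + 1) := by
  rcases h with ⟨i, t, s, hs, hst, hdeg, rfl⟩
  refine ⟨i, Finsupp.single j 1 + t, s, hs, le_add_of_nonneg_of_le zero_le hst, ?_, ?_⟩
  · rw [deg'_add, deg'_single]; omega
  · rw [← mul_assoc, Xmul]

lemma rep_decomp {K : Type*} [Field K] {n m : ℕ} {O : Fin m → Finset (Fin n →₀ ℕ)}
    {f : Fin m → MvPolynomial (Fin n) K} {g : MvPolynomial (Fin n) K} {d : ℕ}
    (h : Rep' O f g (d + 1)) :
    ∃ j g', g = X j * g' ∧ Rep' O f g' d := by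
  rcases h with ⟨i, t, s, hs, hst, hdeg, rfl⟩
  have hne : s ≠ t := by
    intro h; subst h; omega
  have : ∃ j, s j < t j := by
    by_contra hc
    push_neg at hc
    exact hne (le_antisymm hst fun j => hc j)
  rcases this with ⟨j, hj⟩
  have hle : Finsupp.single j 1 ≤ t := Finsupp.single_le_iff.mpr (by omega)
  set t' := t - Finsupp.single j 1 with ht'
  have hsum : Finsupp.single j 1 + t' = t := by
    rw [ht', add_tsub_cancel_of_le hle]
  refine ⟨j, monomial t' (1 : K) * f i, ?_, i, t', s, hs, ?_, ?_, rfl⟩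
  · rw [← mul_assoc, Xmul, hsum]
  · intro x
    rw [ht', Finsupp.tsub_apply]
    rcases eq_or_ne x j with rfl | hx
    · simp; omega
    · simp [Finsupp.single_apply, hx.symm]
      exact hst x
  · have := congrArg deg' hsum
    rw [deg'_add, deg'_single] at this
    omega

lemma aset_mono {K : Type*} [Field K] {n m : ℕ} {O : Fin m → Finset (Fin n →₀ ℕ)}
    {f : Fin m → MvPolynomial (Fin n) K} {k l : ℕ} (h : k ≤ l) :
    Aset O f k ⊆ Aset O f l := by
  rintro g ⟨d, hd, hrep⟩
  exact ⟨d, hd.trans h, hrep⟩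

lemma closure_eq {K : Type*} [Field K] {n m : ℕ} (O : Fin m → Finset (Fin n →₀ ℕ))
    (f : Fin m → MvPolynomial (Fin n) K) (k : ℕ) :
    borderClosureS (fTermSet O f) k = Aset O f k := by
  induction k with
  | zero =>
    rw [borderClosureS, fTermSet_eq]
    ext g
    constructor
    · intro h; exact ⟨0, le_rfl, h⟩
    · rintro ⟨d, hd, h⟩; interval_cases d; exact h
  | succ k ih =>
    rw [borderClosureS, ih]
    ext g
    constructor
    · rintro (hg | ⟨hg, hng⟩)
      · exact aset_mono (Nat.le_succ k) hg
      · rcases Set.mem_iUnion.mp hg with ⟨j, g', hg', rfl⟩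
        rcases hg' with ⟨d, hd, hrep⟩
        exact ⟨d + 1, by omega, rep_step j hrep⟩
    · rintro ⟨d, hd, hrep⟩
      by_cases hk : g ∈ Aset O f k
      · exact Or.inl hk
      · have hd1 : d = k + 1 := by
          rcases Nat.lt_or_ge d (k + 1) with h | h
          · exact absurd ⟨d, by omega, hrep⟩ hk
          · omega
        subst hd1
        rcases rep_decomp hrep with ⟨j, g', rfl, hrep'⟩
        exact Or.inr ⟨Set.mem_iUnion.mpr ⟨j, g', ⟨k, le_rfl, hrep'⟩, rfl⟩, hk⟩

lemma hb_sub {K : Type*} [Field K] {n m : ℕ} (O : Fin m → Finset (Fin n →₀ ℕ))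
    (f : Fin m → MvPolynomial (Fin n) K) (k : ℕ) :
    higherBorderS (fTermSet O f) k ⊆ Aset O f k := by
  cases k with
  | zero =>
    rw [higherBorderS, fTermSet_eq]
    intro g hg; exact ⟨0, le_rfl, hg⟩
  | succ k =>
    rw [higherBorderS]
    intro g hg
    have : g ∈ borderClosureS (fTermSet O f) (k + 1) := Or.inr hg
    rwa [closure_eq] at this

lemma hb_notin {K : Type*} [Field K] {n m : ℕ} (O : Fin m → Finset (Fin n →₀ ℕ))
    (f : Fin m → MvPolynomial (Fin n) K) (k : ℕ) {g : MvPolynomial (Fin n) K}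
    (hg : g ∈ higherBorderS (fTermSet O f) (k + 1)) : g ∉ Aset O f k := by
  rw [higherBorderS] at hg
  rw [← closure_eq]
  exact hg.2

/-- If all `O_i` are nonempty, the set of all `F`-terms `T^n·f_1 ∪ ⋯ ∪ T^n·f_m` is the
disjoint union `⋃_{j≥0} ∂^j O_F` of all higher borders of `O_F`. -/
theorem stmt_7 {K : Type*} [Field K] {n m : ℕ}
    (f : Fin m → MvPolynomial (Fin n) K) (hf : ∀ i, f i ≠ 0)
    (O : Fin m → Finset (Fin n →₀ ℕ)) (hO : ∀ i, IsOrderIdeal (O i))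
    (hne : ∀ i, (O i).Nonempty) :
    (⋃ i, Set.range fun t : Fin n →₀ ℕ => monomial t (1 : K) * f i) =
      (⋃ j : ℕ, higherBorderS (fTermSet O f) j) ∧
    ∀ i j : ℕ, i ≠ j →
      higherBorderS (fTermSet O f) i ∩ higherBorderS (fTermSet O f) j = ∅ := by
  have hzero : ∀ i, (0 : Fin n →₀ ℕ) ∈ O i := fun i => by
    obtain ⟨s, hs⟩ := hne i
    exact hO i s hs 0 zero_le
  constructor
  · ext g
    constructor
    · intro hg
      rcases Set.mem_iUnion.mp hg with ⟨i, t, rfl⟩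
      -- g = monomial t 1 * f i ; it has a representation with s = 0
      have hrepset : Set.Nonempty {d | Rep' O f (monomial t (1 : K) * f i) d} :=
        ⟨deg' t, i, t, 0, hzero i, zero_le, by simp [deg'], rfl⟩
      set d0 := sInf {d | Rep' O f (monomial t (1 : K) * f i) d} with hd0
      have hmem : Rep' O f (monomial t (1 : K) * f i) d0 := Nat.sInf_mem hrepset
      refine Set.mem_iUnion.mpr ⟨d0, ?_⟩
      cases hd : d0 with
      | zero =>
        rw [higherBorderS, fTermSet_eq]
        rwa [hd] at hmem
      | succ k =>
        rw [hd] at hmem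
        rw [higherBorderS]
        rcases rep_decomp hmem with ⟨j, g', hgeq, hrep'⟩
        constructor
        · refine Set.mem_iUnion.mpr ⟨j, g', ?_, hgeq.symm⟩
          rw [closure_eq]
          exact ⟨k, le_rfl, hrep'⟩
        · rw [closure_eq]
          rintro ⟨d, hdk, hrep⟩
          have : d0 ≤ d := Nat.sInf_le hrep
          omega
    · intro hg
      rcases Set.mem_iUnion.mp hg with ⟨j, hj⟩
      rcases hb_sub O f j hj with ⟨d, hd, i, t, s, hs, hst, hdeg, rfl⟩
      exact Set.mem_iUnion.mpr ⟨i, t, rfl⟩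
  · intro i j hij
    ext g
    simp only [Set.mem_inter_iff, Set.mem_empty_iff_false, iff_false, not_and]
    intro hgi hgj
    rcases Nat.lt_or_ge i j with h | h
    · obtain ⟨k, rfl⟩ : ∃ k, j = k + 1 := ⟨j - 1, by omega⟩
      exact hb_notin O f k hgj (aset_mono (by omega) (hb_sub O f i hgi))
    · have h' : j < i := by omega
      obtain ⟨k, rfl⟩ : ∃ k, i = k + 1 := ⟨i - 1, by omega⟩
      exact hb_notin O f k hgi (aset_mono (by omega) (hb_sub O f j hgj))
end

section
/- Let O_F = {t_1 f_{α_1},…,t_μ f_{α_μ}} be an F-order ideal with each O_i nonempty, and let G = {g_1,…,g_ν} be an O_F-subideal border prebasis. Then the residue classes in P/⟨G⟩ of the elements of O_F generate the image of the ideal J in P/⟨G⟩ as a K-vector space; that is, every f ∈ J is congruent modulo ⟨g_1,…,g_ν⟩ to a K-linear combination c_1 t_1 f_{α_1} + ⋯ + c_μ t_μ f_{α_μ} with c_i ∈ K. -/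
open MvPolynomial

/-- The degree of a term (exponent vector). -/
def termDeg {n : ℕ} (t : Fin n →₀ ℕ) : ℕ := t.sum fun _ e => e

/-- The `F`-order ideal `O_F = O_1·f_1 ∪ ⋯ ∪ O_m·f_m`, encoded as the set of pairs
`(t, i)` with `t ∈ O_i`; a pair `(t, i)` represents the `F`-term `t·f_i`. -/
def fPairs {n m : ℕ} (O : Fin m → Finset (Fin n →₀ ℕ)) : Set ((Fin n →₀ ℕ) × Fin m) :=
  {p | p.1 ∈ O p.2}

/-- The border `∂S = (x_1·S ∪ ⋯ ∪ x_n·S) \ S` of a set `S` of `F`-terms. -/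
def borderP {n m : ℕ} (S : Set ((Fin n →₀ ℕ) × Fin m)) : Set ((Fin n →₀ ℕ) × Fin m) :=
  (⋃ j : Fin n, (fun p => (p.1 + Finsupp.single j 1, p.2)) '' S) \ S

/-- The `k`-th border closure: `∂̄⁰S = S` and `∂̄^{k+1}S = ∂̄^k S ∪ ∂(∂̄^k S)`. -/
def borderClosureP {n m : ℕ} (S : Set ((Fin n →₀ ℕ) × Fin m)) :
    ℕ → Set ((Fin n →₀ ℕ) × Fin m)
  | 0 => S
  | k + 1 => borderClosureP S k ∪ borderP (borderClosureP S k)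

/-- The `O_F`-index of an `F`-term: `ind_{O_F}(t·f_i) = min {k | t·f_i ∈ ∂̄^k O_F}`. -/
noncomputable def indOF {n m : ℕ} (S : Set ((Fin n →₀ ℕ) × Fin m)) (p : (Fin n →₀ ℕ) × Fin m) : ℕ :=
  sInf {k | p ∈ borderClosureP S k}

/-- The `O_F`-index of a representation `(p_1·f_1, …, p_m·f_m)` of a polynomial of `J`:
the maximum of `ind_{O_F}(t·f_i)` over `i` and `t ∈ Supp(p_i)`. -/
noncomputable def indRep {K : Type*} [Field K] {n m : ℕ}
    (O : Fin m → Finset (Fin n →₀ ℕ)) (p : Fin m → MvPolynomial (Fin n) K) : ℕ :=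
  Finset.univ.sup fun i => (p i).support.sup fun u => indOF (fPairs O) (u, i)

/-- If `G = {g_1,…,g_ν}` is an `O_F`-subideal border prebasis, then the residue classes of
the elements of `O_F` generate the image of `J` in `P ⧸ ⟨G⟩` as a `K`-vector space: every
`f ∈ J` is congruent modulo `⟨g_1,…,g_ν⟩` to a `K`-linear combination
`c_1 t_1 f_{α_1} + ⋯ + c_μ t_μ f_{α_μ}`. -/
theorem stmt_15 {K : Type*} [Field K] {n m μ ν : ℕ}
    (f : Fin m → MvPolynomial (Fin n) K) (hf : ∀ i, f i ≠ 0)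
    (O : Fin m → Finset (Fin n →₀ ℕ)) (hO : ∀ i, IsOrderIdeal (O i))
    (hne : ∀ i, (O i).Nonempty)
    (t : Fin μ → (Fin n →₀ ℕ)) (α : Fin μ → Fin m)
    (hOF : (Set.range fun i => (t i, α i)) = fPairs O)
    (b : Fin ν → (Fin n →₀ ℕ)) (β : Fin ν → Fin m)
    (hB : (Set.range fun j => (b j, β j)) = borderP (fPairs O))
    (g : Fin ν → MvPolynomial (Fin n) K) (c : Fin μ → Fin ν → K)
    (hg : ∀ j, g j = monomial (b j) (1 : K) * f (β j) -
      ∑ i, c i j • (monomial (t i) (1 : K) * f (α i))) :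
    ∀ q ∈ Ideal.span (Set.range f),
      ∃ d : Fin μ → K,
        q - ∑ i, d i • (monomial (t i) (1 : K) * f (α i)) ∈
          Ideal.span (Set.range g) := by

  intro q hq
  classical
  set s : Fin μ → MvPolynomial (Fin n) K :=
    fun i => monomial (t i) (1 : K) * f (α i) with hs
  set I : Ideal (MvPolynomial (Fin n) K) := Ideal.span (Set.range g) with hI
  -- The set of polynomials congruent mod I to a K-combination of the s i
  let V : Submodule K (MvPolynomial (Fin n) K) :=
    { carrier := {q | ∃ d : Fin μ → K, q - ∑ i, d i • s i ∈ I}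
      add_mem' := by
        rintro a b ⟨d1, h1⟩ ⟨d2, h2⟩
        refine ⟨d1 + d2, ?_⟩
        have : a + b - ∑ i, (d1 + d2) i • s i =
            (a - ∑ i, d1 i • s i) + (b - ∑ i, d2 i • s i) := by
          simp [add_smul, Finset.sum_add_distrib]; ring
        rw [this]; exact add_mem h1 h2
      zero_mem' := by
        refine ⟨0, ?_⟩
        simp
      smul_mem' := by
        rintro a q ⟨d, h⟩
        refine ⟨fun i => a * d i, ?_⟩
        have : a • q - ∑ i, (a * d i) • s i = C a * (q - ∑ i, d i • s i) := by
          rw [mul_sub, Finset.mul_sum]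
          simp [MvPolynomial.smul_eq_C_mul, mul_assoc]
        rw [this]; exact Ideal.mul_mem_left _ _ h }
  have hIV : ∀ x ∈ I, x ∈ V := by
    intro x hx
    exact ⟨0, by simpa using hx⟩
  -- key lemma A: F-terms and border terms are in V
  have lemA : ∀ p : (Fin n →₀ ℕ) × Fin m,
      p ∈ fPairs O ∪ borderP (fPairs O) →
      monomial p.1 (1 : K) * f p.2 ∈ V := by
    rintro p (hp | hp)
    · rw [← hOF] at hp
      obtain ⟨i0, hi0⟩ := hp
      refine ⟨fun k => if k = i0 then 1 else 0, ?_⟩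
      have hsum : (∑ i, (if i = i0 then (1:K) else 0) • s i) = s i0 := by
        simp [ite_smul]
      rw [hsum]
      have : monomial p.1 (1 : K) * f p.2 = s i0 := by
        rw [← hi0]
      rw [this, sub_self]
      exact zero_mem I
    · rw [← hB] at hp
      obtain ⟨j0, hj0⟩ := hp
      refine ⟨fun i => c i j0, ?_⟩
      have : monomial p.1 (1 : K) * f p.2 - ∑ i, c i j0 • s i = g j0 := by
        rw [hg j0, ← hj0]
      rw [this]
      exact Ideal.subset_span ⟨j0, rfl⟩
  -- zero term is an F-term
  have h0 : ∀ i : Fin m, (0 : Fin n →₀ ℕ) ∈ O i := by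
    intro i
    obtain ⟨w, hw⟩ := hne i
    exact hO i w hw 0 zero_le
  -- multiplying an F-term by a variable lands in F-terms ∪ border
  have hstep : ∀ (i' : Fin μ) (j : Fin n),
      ((t i' + Finsupp.single j 1, α i') : (Fin n →₀ ℕ) × Fin m) ∈
        fPairs O ∪ borderP (fPairs O) := by
    intro i' j
    have hmem : ((t i', α i') : (Fin n →₀ ℕ) × Fin m) ∈ fPairs O := by
      rw [← hOF]; exact ⟨i', rfl⟩
    by_cases hc : ((t i' + Finsupp.single j 1, α i') : (Fin n →₀ ℕ) × Fin m) ∈ fPairs O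
    · exact Or.inl hc
    · refine Or.inr ⟨?_, hc⟩
      exact Set.mem_iUnion.2 ⟨j, ⟨(t i', α i'), hmem, rfl⟩⟩
  -- key lemma B: every monomial times f i is in V (induction on degree)
  have lemB : ∀ (N : ℕ) (u : Fin n →₀ ℕ) (i : Fin m), termDeg u ≤ N →
      monomial u (1 : K) * f i ∈ V := by
    intro N
    induction N with
    | zero =>
      intro u i hu
      have hu0 : u = 0 := by
        have : termDeg u = 0 := Nat.le_zero.mp hu
        unfold termDeg at this
        ext j
        by_contra hj
        have hjs : j ∈ u.support := Finsupp.mem_support_iff.2 (by simpa using hj)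
        have := Finset.sum_eq_zero_iff.mp this j hjs
        simp at this
        exact hj (by simp [this])
      subst hu0
      exact lemA (0, i) (Or.inl (h0 i))
    | succ N ih =>
      intro u i hu
      by_cases hu0 : u = 0
      · subst hu0
        exact lemA (0, i) (Or.inl (h0 i))
      · -- pick a variable dividing u
        have : u.support.Nonempty := Finsupp.support_nonempty_iff.2 hu0
        obtain ⟨j, hj⟩ := this
        have hje : u j ≠ 0 := Finsupp.mem_support_iff.1 hj
        set u' : Fin n →₀ ℕ := u - Finsupp.single j 1 with hu'
        have hle : Finsupp.single j 1 ≤ u := by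
          rw [Finsupp.single_le_iff]
          omega
        have hdecomp : u' + Finsupp.single j 1 = u := tsub_add_cancel_of_le hle
        have hdeg : termDeg u = termDeg u' + 1 := by
          unfold termDeg
          rw [← hdecomp]
          rw [Finsupp.sum_add_index' (fun _ => rfl) (fun _ _ _ => rfl)]
          simp [Finsupp.sum_single_index]
        have hdeg' : termDeg u' ≤ N := by omega
        obtain ⟨d', hd'⟩ := ih u' i hdeg'
        -- multiply the congruence by X j
        have hXI : (X j : MvPolynomial (Fin n) K) *
            (monomial u' (1 : K) * f i - ∑ k, d' k • s k) ∈ I :=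
          Ideal.mul_mem_left _ _ hd'
        have hXeq : (X j : MvPolynomial (Fin n) K) *
            (monomial u' (1 : K) * f i - ∑ k, d' k • s k) =
            monomial u (1 : K) * f i -
              ∑ k, d' k • (monomial (t k + Finsupp.single j 1) (1 : K) * f (α k)) := by
          rw [mul_sub, Finset.mul_sum]
          congr 1
          · rw [← mul_assoc]
            congr 1
            rw [X, monomial_mul]
            congr 1
            · rw [add_comm, hdecomp]
            · ring
          · refine Finset.sum_congr rfl fun k _ => ?_
            rw [mul_smul_comm]
            congr 1
            rw [hs]
            rw [← mul_assoc, X, monomial_mul]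
            congr 2
            · rw [add_comm]
            · ring
        -- each shifted term is in V
        have hterm : ∀ k : Fin μ,
            monomial (t k + Finsupp.single j 1) (1 : K) * f (α k) ∈ V :=
          fun k => lemA (t k + Finsupp.single j 1, α k) (hstep k j)
        have hsumV : (∑ k, d' k • (monomial (t k + Finsupp.single j 1) (1 : K) * f (α k))) ∈ V :=
          Submodule.sum_mem V fun k _ => Submodule.smul_mem V _ (hterm k)
        have := Submodule.add_mem V
          (hIV _ (hXeq ▸ hXI)) hsumV
        simpa using this
  -- now decompose q
  rw [hI] at *
  have hq' : q ∈ Ideal.span (Set.range f) := hq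
  rw [Ideal.mem_span_range_iff_exists_fun] at hq'
  obtain ⟨p, hp⟩ := hq'
  have hqV : q ∈ V := by
    rw [← hp]
    refine Submodule.sum_mem V fun i _ => ?_
    have hrep : p i * f i = ∑ u ∈ (p i).support,
        (p i).coeff u • (monomial u (1 : K) * f i) := by
      conv_lhs => rw [(p i).as_sum]
      rw [Finset.sum_mul]
      refine Finset.sum_congr rfl fun u _ => ?_
      rw [← smul_mul_assoc, MvPolynomial.smul_monomial, smul_eq_mul, mul_one]
    rw [hrep]
    exact Submodule.sum_mem V fun u _ =>
      Submodule.smul_mem V _ (lemB (termDeg u) u i le_rfl)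
  exact hqV
end

section
/- Let O_F be an F-order ideal with each O_i nonempty, and let G = {g_1,…,g_ν} be an O_F-subideal border basis of an ideal I ⊆ P. Then G generates the intersection ideal: ⟨g_1,…,g_ν⟩ = I ∩ J. -/
open MvPolynomial

/-- If `G = {g_1,…,g_ν}` is an `O_F`-subideal border basis of an ideal `I`, then `G`
generates the intersection ideal: `⟨g_1,…,g_ν⟩ = I ∩ J`. -/
theorem stmt_16 {K : Type*} [Field K] {n m μ ν : ℕ}
    (f : Fin m → MvPolynomial (Fin n) K) (hf : ∀ i, f i ≠ 0)
    (O : Fin m → Finset (Fin n →₀ ℕ)) (hO : ∀ i, IsOrderIdeal (O i))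
    (hne : ∀ i, (O i).Nonempty)
    (t : Fin μ → (Fin n →₀ ℕ)) (α : Fin μ → Fin m)
    (hOF : (Set.range fun i => (t i, α i)) = fPairs O)
    (b : Fin ν → (Fin n →₀ ℕ)) (β : Fin ν → Fin m)
    (hB : (Set.range fun j => (b j, β j)) = borderP (fPairs O))
    (g : Fin ν → MvPolynomial (Fin n) K) (c : Fin μ → Fin ν → K)
    (hg : ∀ j, g j = monomial (b j) (1 : K) * f (β j) -
      ∑ i, c i j • (monomial (t i) (1 : K) * f (α i)))
    (I : Ideal (MvPolynomial (Fin n) K))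
    -- `G ⊆ I` …
    (hGI : ∀ j, g j ∈ I)
    -- … and the residue classes of the elements of `O_F` form a `K`-basis of the image
    -- `(I+J)/I` of `J` in `P ⧸ I`:
    (hli : LinearIndependent K (fun i : Fin μ =>
      Ideal.Quotient.mk I (monomial (t i) (1 : K) * f (α i))))
    (hsp : Submodule.span K (Set.range fun i : Fin μ =>
        Ideal.Quotient.mk I (monomial (t i) (1 : K) * f (α i))) =
      Submodule.map (Ideal.Quotient.mkₐ K I).toLinearMap
        (Submodule.restrictScalars K (Ideal.span (Set.range f)))) :
    Ideal.span (Set.range g) = I ⊓ Ideal.span (Set.range f) := by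
  classical
  set v : Fin μ → MvPolynomial (Fin n) K := fun i => monomial (t i) (1 : K) * f (α i) with hv
  set M : Submodule K (MvPolynomial (Fin n) K) :=
    (Ideal.span (Set.range g)).restrictScalars K ⊔ Submodule.span K (Set.range v) with hM
  -- 0 ∈ O i
  have h0 : ∀ i, (0 : Fin n →₀ ℕ) ∈ O i := fun i => by
    obtain ⟨x, hx⟩ := hne i
    exact hO i x hx 0 zero_le
  have hpairs : ∀ s : Fin μ, (t s, α s) ∈ fPairs O := fun s => by
    rw [← hOF]; exact Set.mem_range_self s
  -- key: shifted F-terms stay in M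
  have key : ∀ (s : Fin μ) (j : Fin n),
      monomial (t s + Finsupp.single j 1) (1 : K) * f (α s) ∈ M := by
    intro s j
    by_cases hmem : ((t s + Finsupp.single j 1, α s) : (Fin n →₀ ℕ) × Fin m) ∈ fPairs O
    · rw [← hOF] at hmem
      obtain ⟨i', hi'⟩ := hmem
      have h1 : t i' = t s + Finsupp.single j 1 := congrArg Prod.fst hi'
      have h2 : α i' = α s := congrArg Prod.snd hi'
      have heq : monomial (t s + Finsupp.single j 1) (1 : K) * f (α s) = v i' := by
        show _ = monomial (t i') (1 : K) * f (α i')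
        rw [h1, h2]
      rw [heq]
      exact Submodule.mem_sup_right (Submodule.subset_span (Set.mem_range_self i'))
    · have hbd : ((t s + Finsupp.single j 1, α s) : (Fin n →₀ ℕ) × Fin m) ∈ borderP (fPairs O) := by
        refine ⟨Set.mem_iUnion.2 ⟨j, ⟨(t s, α s), hpairs s, rfl⟩⟩, hmem⟩
      rw [← hB] at hbd
      obtain ⟨j', hj'⟩ := hbd
      have h1 : b j' = t s + Finsupp.single j 1 := congrArg Prod.fst hj'
      have h2 : β j' = α s := congrArg Prod.snd hj'
      have heq : monomial (t s + Finsupp.single j 1) (1 : K) * f (α s)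
          = g j' + ∑ i, c i j' • v i := by
        rw [hg j', ← h1, ← h2]; ring
      rw [heq]
      refine Submodule.add_mem _ ?_ ?_
      · exact Submodule.mem_sup_left
          (show g j' ∈ (Ideal.span (Set.range g)).restrictScalars K from
            Ideal.subset_span (Set.mem_range_self j'))
      · exact Submodule.mem_sup_right (Submodule.sum_mem _ fun i _ =>
          Submodule.smul_mem _ _ (Submodule.subset_span (Set.mem_range_self i)))
  -- M is closed under multiplication by X j
  have mulX : ∀ (j : Fin n) (q : MvPolynomial (Fin n) K), q ∈ M → X j * q ∈ M := by
    intro j q hq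
    rw [hM, Submodule.mem_sup] at hq
    obtain ⟨a, ha, d, hd, rfl⟩ := hq
    rw [mul_add]
    refine Submodule.add_mem _ ?_ ?_
    · exact Submodule.mem_sup_left
        (show X j * a ∈ (Ideal.span (Set.range g)).restrictScalars K from
          Ideal.mul_mem_left _ _ ha)
    · refine Submodule.span_induction (p := fun d _ => X j * d ∈ M) ?_ ?_ ?_ ?_ hd
      · rintro _ ⟨s, rfl⟩
        have : X j * v s = monomial (t s + Finsupp.single j 1) (1 : K) * f (α s) := by
          rw [hv]
          rw [← mul_assoc, X, monomial_mul, one_mul, add_comm]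
        rw [this]; exact key s j
      · simp only [mul_zero]; exact Submodule.zero_mem M
      · intro x y _ _ hx hy; rw [mul_add]; exact Submodule.add_mem _ hx hy
      · intro r x _ hx; rw [mul_smul_comm]; exact Submodule.smul_mem _ _ hx
  -- M is closed under multiplication by any polynomial
  have mulmem : ∀ (p q : MvPolynomial (Fin n) K), q ∈ M → p * q ∈ M := by
    intro p
    induction p using MvPolynomial.induction_on with
    | C a => intro q hq; rw [MvPolynomial.C_mul']; exact Submodule.smul_mem _ _ hq
    | add p1 p2 h1 h2 => intro q hq; rw [add_mul]; exact Submodule.add_mem _ (h1 q hq) (h2 q hq)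
    | mul_X p j hp => intro q hq
                      have : p * X j * q = p * (X j * q) := by ring
                      rw [this]; exact hp _ (mulX j q hq)
  -- J ⊆ M
  have hJM : ∀ h ∈ Ideal.span (Set.range f), h ∈ M := by
    intro h hh
    refine Submodule.span_induction (p := fun h _ => h ∈ M) ?_ (Submodule.zero_mem M)
      (fun x y _ _ hx hy => Submodule.add_mem _ hx hy)
      (fun r x _ hx => mulmem r x hx) hh
    rintro _ ⟨i, rfl⟩
    have : ((0 : Fin n →₀ ℕ), i) ∈ fPairs O := h0 i
    rw [← hOF] at this
    obtain ⟨s, hs⟩ := this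
    have h1 : t s = 0 := congrArg Prod.fst hs
    have h2 : α s = i := congrArg Prod.snd hs
    have heq : f i = v s := by
      show _ = monomial (t s) (1 : K) * f (α s)
      rw [h1, h2, monomial_zero', C_1, one_mul]
    rw [heq]
    exact Submodule.mem_sup_right (Submodule.subset_span (Set.mem_range_self s))
  -- span g ≤ I
  have hGIle : Ideal.span (Set.range g) ≤ I := by
    rw [Ideal.span_le]; rintro _ ⟨j, rfl⟩; exact hGI j
  -- span g ≤ J
  have hGJ : Ideal.span (Set.range g) ≤ Ideal.span (Set.range f) := by
    rw [Ideal.span_le]; rintro _ ⟨j, rfl⟩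
    rw [hg j]
    refine Ideal.sub_mem _ (Ideal.mul_mem_left _ _ (Ideal.subset_span (Set.mem_range_self _)))
      (Ideal.sum_mem _ fun i _ => ?_)
    rw [MvPolynomial.smul_eq_C_mul]
    exact Ideal.mul_mem_left _ _ (Ideal.mul_mem_left _ _ (Ideal.subset_span (Set.mem_range_self _)))
  -- main proof
  apply le_antisymm
  · exact le_inf hGIle hGJ
  · rintro h ⟨hI, hJ⟩
    have hM0 : h ∈ M := hJM h hJ
    rw [hM, Submodule.mem_sup] at hM0
    obtain ⟨a, ha, d, hd, rfl⟩ := hM0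
    have haI : a ∈ I := hGIle ha
    have hdI : d ∈ I := by
      have : (a + d) - a ∈ I := I.sub_mem hI haI
      simpa using this
    rw [Submodule.mem_span_range_iff_exists_fun] at hd
    obtain ⟨cc, hcc⟩ := hd
    have hq : ∑ i, cc i • Ideal.Quotient.mk I (v i) = 0 := by
      have := congrArg (Ideal.Quotient.mkₐ K I) hcc
      simp only [map_sum, map_smul, Ideal.Quotient.mkₐ_eq_mk] at this
      rw [this, Ideal.Quotient.eq_zero_iff_mem]
      exact hdI
    have hc0 : ∀ i, cc i = 0 := by
      have := (Fintype.linearIndependent_iff.mp hli) cc hq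
      exact this
    have hd0 : d = 0 := by
      rw [← hcc]
      simp [hc0]
    rw [hd0, add_zero]
    exact ha
end
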